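/- For positive integers n and real (or formal) parameters a, Q, the coefficient of $z^n$ in the formal power series $\frac{(1+z)^{(a+1)n}}{(1-Qz)^{(a+1)n}}$ equals $n(a+1)\sum_{j=0}^{n} \frac{\prod_{k=1}^{n-1}(na+j+k)}{j!\,(n-j)!} Q^j$. -/

import Mathlib

open PowerSeries Finset

/-- The coefficient of `z^n` in `(1+z)^{(a+1)n} · (1-Qz)^{-(a+1)n}`, where
`(1-Qz)^{-N} = ∑_{j≥0} C(N+j-1, j) Q^j z^j`, equals
`n(a+1) ∑_{j=0}^{n} (∏_{k=1}^{n-1} (na+j+k)) / (j! (n-j)!) · Q^j`. -/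
lemma myDescAdd (a m k : ℕ) : a.descFactorial (m + k) = a.descFactorial m * (a - m).descFactorial k := by
  induction k with
  | zero => simp
  | succ k ih =>
      rw [← Nat.add_assoc, Nat.descFactorial_succ, ih, Nat.descFactorial_succ,
        Nat.sub_sub]
      ring

lemma myKey (N n j : ℕ) (hn : 0 < n) (hN : n ≤ N) (hj : j ≤ n) :
    N.descFactorial (n - j) * (N + j - 1).descFactorial j
      = N * (N + j - 1).descFactorial (n - 1) := by
  rcases Nat.eq_zero_or_pos j with rfl | hj0
  · obtain ⟨N', rfl⟩ : ∃ N', N = N' + 1 := ⟨N - 1, by omega⟩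
    obtain ⟨m, rfl⟩ : ∃ m, n = m + 1 := ⟨n - 1, by omega⟩
    simp only [Nat.sub_zero, Nat.add_zero, Nat.descFactorial_zero, mul_one,
      Nat.succ_sub_one, Nat.succ_descFactorial_succ]
  · obtain ⟨i, rfl⟩ : ∃ i, j = i + 1 := ⟨j - 1, by omega⟩
    have h4 : N + (i + 1) - 1 = N + i := by omega
    have h1 : n - 1 = i + (n - (i + 1)) := by omega
    have e : (N + i).descFactorial (i + 1) = N * (N + i).descFactorial i := by
      rw [Nat.descFactorial_succ, Nat.add_sub_cancel]
    rw [h4, e, h1, myDescAdd, Nat.add_sub_cancel]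
    ring

lemma coeff_one_add_X_pow' (R : Type*) [CommRing R] (m i : ℕ) :
    PowerSeries.coeff (R := R) i ((1 + PowerSeries.X) ^ m) = (m.choose i : R) := by
  have : ((1 + Polynomial.X : Polynomial R) : PowerSeries R) = 1 + PowerSeries.X := by
    simp
  rw [← this, ← Polynomial.coe_pow, Polynomial.coeff_coe, Polynomial.coeff_one_add_X_pow]


theorem coeff_binomial_quotient_eq {R : Type*} [CommRing R] [Algebra ℚ R]
    (a : ℕ) (Q : R) (n : ℕ) (hn : 0 < n) :
    PowerSeries.coeff (R := R) n
      ((1 + PowerSeries.X) ^ ((a + 1) * n) *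
        PowerSeries.mk fun j => ((((a + 1) * n + j - 1).choose j : R) * Q ^ j))
    = ∑ j ∈ Finset.range (n + 1),
        algebraMap ℚ R ((n * (a + 1) : ℚ) *
          (∏ k ∈ Finset.Icc 1 (n - 1), ((n * a + j + k : ℕ) : ℚ)) /
          (j.factorial * (n - j).factorial)) * Q ^ j := by
  set N := (a + 1) * n with hN
  have hNe : N = n * a + n := by rw [hN]; ring
  have hNn : n ≤ N := by omega
  rw [PowerSeries.coeff_mul, Finset.Nat.sum_antidiagonal_eq_sum_range_succ_mk]
  rw [← Finset.sum_range_reflect]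
  refine Finset.sum_congr rfl fun j hj => ?_
  rw [Finset.mem_range, Nat.lt_succ_iff] at hj
  have hnj : n - (n - j) = j := by omega
  simp only [Nat.succ_sub_one]
  rw [hnj, coeff_one_add_X_pow', PowerSeries.coeff_mk]
  rw [← mul_assoc]
  congr 1
  -- product identity, in ℕ
  have hprodN : (∏ k ∈ Finset.Icc 1 (n - 1), (n * a + j + k))
      = (N + j - 1).descFactorial (n - 1) := by
    rw [Nat.descFactorial_eq_prod_range]
    rw [show Finset.Icc 1 (n - 1) = Finset.image (· + 1) (Finset.range (n - 1)) by
      ext x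
      simp only [Finset.mem_Icc, Finset.mem_image, Finset.mem_range]
      constructor
      · rintro ⟨h1, h2⟩; exact ⟨x - 1, by omega, by omega⟩
      · rintro ⟨y, hy, rfl⟩; omega]
    rw [Finset.prod_image (by intro x _ y _ h; simp only at h; omega)]
    rw [← Finset.prod_range_reflect (fun i => N + j - 1 - i) (n - 1)]
    refine Finset.prod_congr rfl fun i hi => ?_
    rw [Finset.mem_range] at hi
    omega
  have hprod : (∏ k ∈ Finset.Icc 1 (n - 1), ((n * a + j + k : ℕ) : ℚ))
      = ((N + j - 1).descFactorial (n - 1) : ℚ) := by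
    rw [← Nat.cast_prod, hprodN]
  have hkey := myKey N n j hn hNn hj
  have hfac : ((n : ℚ) * (a + 1)) * ((N + j - 1).descFactorial (n - 1) : ℚ)
      = (N.choose (n - j) : ℚ) * ((N + j - 1).choose j : ℚ)
          * (j.factorial * (n - j).factorial) := by
    have e1 : (N.descFactorial (n - j) : ℚ) = (n - j).factorial * N.choose (n - j) := by
      exact_mod_cast congrArg (Nat.cast : ℕ → ℚ)
        (Nat.descFactorial_eq_factorial_mul_choose N (n - j))
    have e2 : ((N + j - 1).descFactorial j : ℚ) = j.factorial * (N + j - 1).choose j := by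
      exact_mod_cast congrArg (Nat.cast : ℕ → ℚ)
        (Nat.descFactorial_eq_factorial_mul_choose (N + j - 1) j)
    have h := congrArg (Nat.cast : ℕ → ℚ) hkey
    push_cast at h
    rw [e1, e2] at h
    have hne : (N : ℚ) = n * (a + 1) := by rw [hNe]; push_cast; ring
    rw [hne] at h
    linear_combination -h
  have hdiv : ((n : ℚ) * (a + 1)) * ((N + j - 1).descFactorial (n - 1) : ℚ)
        / (j.factorial * (n - j).factorial)
      = ((N.choose (n - j) * (N + j - 1).choose j : ℕ) : ℚ) := by
    rw [div_eq_iff (by positivity)]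
    push_cast
    linear_combination hfac
  rw [hprod, hdiv, map_natCast]
  push_cast
  ring
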